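/- With the V_i basis of g₂ ⊂ so(7), let h = ℝV₁(2,-1,-1) + ℝV₂(2,-1,-1) + ℝV₃(2,-1,-1) and Z = V₆(0,1,-1). Then {H ∈ h : [H, Z] = 0} = {0}. -/

import Mathlib

/-- The elementary skew-symmetric matrix `G_{ij} ∈ so(7)` with
`G_{ij}(e_i) = e_j`, `G_{ij}(e_j) = -e_i` (indices here are 0-based, so the
paper's `G₁₂` is `G 0 1`, etc.). -/
def G (i j : Fin 7) : Matrix (Fin 7) (Fin 7) ℝ :=
  Matrix.single j i 1 - Matrix.single i j 1

def V₁ (l m n : ℝ) : Matrix (Fin 7) (Fin 7) ℝ := l • G 1 2 + m • G 3 4 + n • G 5 6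
def V₂ (l m n : ℝ) : Matrix (Fin 7) (Fin 7) ℝ := -(l • G 0 2) - m • G 3 5 + n • G 4 6
def V₃ (l m n : ℝ) : Matrix (Fin 7) (Fin 7) ℝ := l • G 0 1 + m • G 3 6 + n • G 4 5
def V₄ (l m n : ℝ) : Matrix (Fin 7) (Fin 7) ℝ := -(l • G 0 4) + m • G 1 5 - n • G 2 6
def V₅ (l m n : ℝ) : Matrix (Fin 7) (Fin 7) ℝ := l • G 0 3 - m • G 1 6 - n • G 2 5
def V₆ (l m n : ℝ) : Matrix (Fin 7) (Fin 7) ℝ := -(l • G 0 6) - m • G 1 3 + n • G 2 4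
def V₇ (l m n : ℝ) : Matrix (Fin 7) (Fin 7) ℝ := l • G 0 5 + m • G 1 4 + n • G 2 3

set_option maxHeartbeats 1600000 in
/-- for `h = ℝV₁(2,-1,-1) + ℝV₂(2,-1,-1) + ℝV₃(2,-1,-1)` and
`Z = V₆(0,1,-1)`, we have `{H ∈ h : [H, Z] = 0} = {0}`. -/
theorem centralizer_of_Z_in_h_trivial :
    ∀ H ∈ Submodule.span ℝ
        ({V₁ 2 (-1) (-1), V₂ 2 (-1) (-1), V₃ 2 (-1) (-1)} :
          Set (Matrix (Fin 7) (Fin 7) ℝ)),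
      ⁅H, V₆ 0 1 (-1)⁆ = 0 → H = 0 := by
  intro H hH hc
  rw [show ({V₁ 2 (-1) (-1), V₂ 2 (-1) (-1), V₃ 2 (-1) (-1)} :
      Set (Matrix (Fin 7) (Fin 7) ℝ)) =
      insert (V₁ 2 (-1) (-1)) (insert (V₂ 2 (-1) (-1)) {V₃ 2 (-1) (-1)}) from rfl,
    Submodule.mem_span_insert] at hH
  obtain ⟨a, w, hw, rfl⟩ := hH
  rw [Submodule.mem_span_insert] at hw
  obtain ⟨b, w', hw', rfl⟩ := hw
  rw [Submodule.mem_span_singleton] at hw'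
  obtain ⟨c, rfl⟩ := hw'
  rw [Ring.lie_def] at hc
  have h14 := congrFun (congrFun hc 1) 4
  have h04 := congrFun (congrFun hc 0) 4
  have h03 := congrFun (congrFun hc 0) 3
  simp (config := { decide := true }) only [V₁, V₂, V₃, V₆, G, Matrix.sub_apply, Matrix.add_apply, Matrix.neg_apply,
    Matrix.smul_apply, Matrix.mul_apply, Matrix.single, Matrix.of_apply,
    Fin.sum_univ_seven, Fin.isValue, smul_eq_mul, Matrix.zero_apply] at h14 h04 h03
  norm_num at h14 h04 h03
  have ha : a = 0 := by linarith
  have hb : b = 0 := by linarith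
  have hcc : c = 0 := by linarith
  simp [ha, hb, hcc]
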